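/- For any graph G = ([n], E): gd(G, x) = ed(∇G, φ(x)) for every x ∈ S_+(G), and consequently gd(G) = ed(∇G). -/

import Mathlib

open Matrix Finset

/-- The suspension `∇G` of a graph `G`: a new apex vertex (`none`) is added, adjacent to
all vertices of `G`. -/
def suspension {V : Type} (G : SimpleGraph V) : SimpleGraph (Option V) where
  Adj u w :=
    match u, w with
    | none, none => False
    | none, some _ => True
    | some _, none => True
    | some a, some b => G.Adj a b
  symm := by
    constructor
    rintro (_ | u) (_ | w) h
    · exact h
    · trivial
    · trivial
    · exact h.symm
  loopless := by
    constructor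
    rintro (_ | u) h
    · exact h
    · exact G.irrefl h

/-- `a` has a Gram representation in `ℝ^k` for the graph `G`: vectors `p i` with
`⟪p i, p i⟫ = a i i` for all vertices and `⟪p i, p j⟫ = a i j` for all edges. -/
def HasGramRep {V : Type} [Fintype V] (G : SimpleGraph V) (a : V → V → ℝ) (k : ℕ) : Prop :=
  ∃ p : V → (Fin k → ℝ),
    (∀ i, ∑ t, p i t * p i t = a i i) ∧
    (∀ i j, G.Adj i j → ∑ t, p i t * p j t = a i j)

/-- `gd(G, a)`: the smallest `k` such that `a` has a Gram representation in `ℝ^k`. -/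
noncomputable def gdOf {V : Type} [Fintype V] (G : SimpleGraph V) (a : V → V → ℝ) : ℕ :=
  sInf {k : ℕ | HasGramRep G a k}

/-- `gd(G)` as the maximum of `gd(G, a)` over all `a ∈ S₊(G)`. -/
noncomputable def gdSup {V : Type} [Fintype V] (G : SimpleGraph V) : ℕ :=
  sSup {m : ℕ | ∃ a : V → V → ℝ, (∃ k, HasGramRep G a k) ∧ gdOf G a = m}

/-- `d` has a Euclidean (distance) representation in `ℝ^k` for the graph `G`:
vectors `p i` with `‖p i − p j‖² = d i j` for all edges. -/
def HasEucRep {V : Type} [Fintype V] (G : SimpleGraph V) (d : V → V → ℝ) (k : ℕ) : Prop :=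
  ∃ p : V → (Fin k → ℝ),
    ∀ i j, G.Adj i j → ∑ t, (p i t - p j t) ^ 2 = d i j

/-- `ed(G, d)`: the smallest `k` such that `d` has a Euclidean representation in `ℝ^k`. -/
noncomputable def edOf {V : Type} [Fintype V] (G : SimpleGraph V) (d : V → V → ℝ) : ℕ :=
  sInf {k : ℕ | HasEucRep G d k}

/-- `ed(G)`: the maximum of `ed(G, d)` over all `d ∈ EDM(G)`. -/
noncomputable def edSup {V : Type} [Fintype V] (G : SimpleGraph V) : ℕ :=
  sSup {m : ℕ | ∃ d : V → V → ℝ, (∃ k, HasEucRep G d k) ∧ edOf G d = m}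

/-- The map `φ` sending partial Gram data `x` on `G` (indexed by the diagonal and the
edges) to partial distance data `d = φ(x)` on the suspension `∇G` (apex `none`):
`d_{0i} = x_{ii}` and `d_{ij} = x_{ii} + x_{jj} − 2 x_{ij}`. -/
def phi {V : Type} (x : V → V → ℝ) : Option V → Option V → ℝ
  | none, none => 0
  | none, some i => x i i
  | some i, none => x i i
  | some i, some j => x i i + x j j - 2 * x i j

lemma sum_sq_sub' {k : ℕ} (a b : Fin k → ℝ) :
    ∑ t, (a t - b t) ^ 2 =
      (∑ t, a t * a t) + (∑ t, b t * b t) - 2 * ∑ t, a t * b t := by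
  rw [Finset.mul_sum, ← Finset.sum_add_distrib, ← Finset.sum_sub_distrib]
  exact Finset.sum_congr rfl fun t _ => by ring

lemma gram_iff_euc {V : Type} [Fintype V] (G : SimpleGraph V) (x : V → V → ℝ) (k : ℕ) :
    HasGramRep G x k ↔ HasEucRep (suspension G) (phi x) k := by
  constructor
  · rintro ⟨p, hdiag, hedge⟩
    refine ⟨fun o => o.elim 0 p, ?_⟩
    rintro (_ | i) (_ | j) h
    · exact absurd h (by simp [suspension])
    · simp only [Option.elim, phi]
      calc ∑ t, ((0 : Fin k → ℝ) t - p j t) ^ 2 = ∑ t, p j t * p j t :=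
            Finset.sum_congr rfl fun t _ => by simp only [Pi.zero_apply]; ring
        _ = x j j := hdiag j
    · simp only [Option.elim, phi]
      calc ∑ t, (p i t - (0 : Fin k → ℝ) t) ^ 2 = ∑ t, p i t * p i t :=
            Finset.sum_congr rfl fun t _ => by simp; ring
        _ = x i i := hdiag i
    · have hadj : G.Adj i j := h
      simp only [Option.elim, phi]
      rw [sum_sq_sub', hdiag i, hdiag j, hedge i j hadj]
  · rintro ⟨q, hq⟩
    refine ⟨fun i t => q (some i) t - q none t, ?_, ?_⟩
    · intro i
      have h := hq none (some i) trivial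
      calc ∑ t, (q (some i) t - q none t) * (q (some i) t - q none t)
          = ∑ t, (q none t - q (some i) t) ^ 2 :=
            Finset.sum_congr rfl fun t _ => by ring
        _ = x i i := h
    · intro i j hij
      have hi := hq none (some i) trivial
      have hj := hq none (some j) trivial
      have he : (suspension G).Adj (some i) (some j) := hij
      have h3 := hq (some i) (some j) he
      have hii : ∑ t, (q (some i) t - q none t) * (q (some i) t - q none t) = x i i := by
        calc ∑ t, (q (some i) t - q none t) * (q (some i) t - q none t)
            = ∑ t, (q none t - q (some i) t) ^ 2 :=
              Finset.sum_congr rfl fun t _ => by ring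
          _ = x i i := hi
      have hjj : ∑ t, (q (some j) t - q none t) * (q (some j) t - q none t) = x j j := by
        calc ∑ t, (q (some j) t - q none t) * (q (some j) t - q none t)
            = ∑ t, (q none t - q (some j) t) ^ 2 :=
              Finset.sum_congr rfl fun t _ => by ring
          _ = x j j := hj
      have hsub : ∑ t, ((fun t => q (some i) t - q none t) t -
          (fun t => q (some j) t - q none t) t) ^ 2 = x i i + x j j - 2 * x i j := by
        calc ∑ t, ((fun t => q (some i) t - q none t) t -
              (fun t => q (some j) t - q none t) t) ^ 2
            = ∑ t, (q (some i) t - q (some j) t) ^ 2 :=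
              Finset.sum_congr rfl fun t _ => by ring
          _ = x i i + x j j - 2 * x i j := h3
      have := sum_sq_sub' (fun t => q (some i) t - q none t)
        (fun t => q (some j) t - q none t)
      rw [hsub, hii, hjj] at this
      linarith

lemma gdOf_eq_edOf_phi {V : Type} [Fintype V] (G : SimpleGraph V) (x : V → V → ℝ) :
    gdOf G x = edOf (suspension G) (phi x) := by
  unfold gdOf edOf
  congr 1
  ext k
  exact gram_iff_euc G x k

lemma euc_sym {V : Type} [Fintype V] (G : SimpleGraph V) (d : V → V → ℝ) (k : ℕ)
    (h : HasEucRep G d k) : ∀ u w, G.Adj u w → d u w = d w u := by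
  obtain ⟨p, hp⟩ := h
  intro u w huw
  rw [← hp u w huw, ← hp w u huw.symm]
  exact Finset.sum_congr rfl fun t _ => by ring

lemma euc_congr {V : Type} [Fintype V] (G : SimpleGraph V) (d d' : V → V → ℝ)
    (h : ∀ u w, G.Adj u w → d u w = d' u w) (k : ℕ) :
    HasEucRep G d k ↔ HasEucRep G d' k := by
  constructor <;> rintro ⟨p, hp⟩ <;> refine ⟨p, fun u w huw => ?_⟩
  · rw [← h u w huw]; exact hp u w huw
  · rw [h u w huw]; exact hp u w huw

/-- For any graph `G`: `gd(G, x) = ed(∇G, φ(x))` for every `x ∈ S₊(G)`, and consequently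
`gd(G) = ed(∇G)`. -/
theorem gdOf_eq_edOf_suspension {V : Type} [Fintype V] (G : SimpleGraph V) :
    (∀ x : V → V → ℝ, (∃ k, HasGramRep G x k) →
      gdOf G x = edOf (suspension G) (phi x)) ∧
    gdSup G = edSup (suspension G) := by
  classical
  constructor
  · intro x _
    exact gdOf_eq_edOf_phi G x
  · unfold gdSup edSup
    congr 1
    ext m
    constructor
    · rintro ⟨a, ⟨k, hk⟩, hm⟩
      exact ⟨phi a, ⟨k, (gram_iff_euc G a k).mp hk⟩,
        by rw [← gdOf_eq_edOf_phi]; exact hm⟩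
    · rintro ⟨d, ⟨k, hk⟩, hm⟩
      set x : V → V → ℝ := fun i j =>
        if i = j then d none (some i)
        else (d none (some i) + d none (some j) - d (some i) (some j)) / 2 with hx
      have hsym := euc_sym (suspension G) d k hk
      have hagree : ∀ u w, (suspension G).Adj u w → phi x u w = d u w := by
        rintro (_ | i) (_ | j) h
        · exact absurd h (by simp [suspension])
        · simp [phi, hx]
        · have : d none (some i) = d (some i) none := hsym none (some i) trivial
          simp [phi, hx, this]
        · have hadj : G.Adj i j := h
          have hne : i ≠ j := hadj.ne
          simp only [phi, hx, if_pos rfl, if_neg hne]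
          ring
      have hEq : ∀ k', HasEucRep (suspension G) (phi x) k' ↔
          HasEucRep (suspension G) d k' :=
        fun k' => euc_congr (suspension G) (phi x) d hagree k'
      refine ⟨x, ⟨k, (gram_iff_euc G x k).mpr ((hEq k).mpr hk)⟩, ?_⟩
      rw [gdOf_eq_edOf_phi G x, ← hm]
      unfold edOf
      congr 1
      ext k'
      exact hEq k'
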